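/- The map sending an NE-path (given as the sequence of endpoints (x_i, y_i), i = 1..k, of its k east steps) to the tuple (x_1+y_1, ..., x_k+y_k) is a bijection from the set of t-admissible NE-paths from (0,0) to (k, n-k) onto the set of t-admissible (n,k)-columnar tableaux. -/

import Mathlib

/-- An NE-path from (0,0) to (k, n-k) is encoded as a list of `n` booleans
(`true` = east step, `false` = north step) with exactly `k` east steps; after a
prefix `p`, the path is at the lattice point `(p.count true, p.count false)`.
It is t-admissible when it never touches the line `y = x - t`. -/
def pathSet (t n k : ℕ) : Set (List Bool) :=
  {l | l.length = n ∧ l.count true = k ∧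
    ∀ p ∈ l.inits, ((p.count false : ℤ)) ≠ (p.count true : ℤ) - t}

/-- The (1-based) positions of the east steps of the path `l`; the `j`-th east
step ends at the point `(x_j, y_j)` with `x_j + y_j` equal to the `j`-th entry
of this list.  -/
def eastSums (l : List Bool) : List ℕ :=
  ((List.range l.length).filter fun i => l.getD i false).map (· + 1)

lemma eastSums_cons (b : Bool) (l : List Bool) :
    eastSums (b :: l) = (if b then [1] else []) ++ (eastSums l).map (· + 1) := by
  unfold eastSums
  simp only [List.length_cons, List.range_succ_eq_map, List.filter_cons, List.getD_cons_zero,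
    List.filter_map, List.map_map]
  have h1 : (fun i => (b :: l).getD i false) ∘ Nat.succ = fun i => l.getD i false := by
    funext i; simp
  rw [h1]
  cases b <;> simp [Function.comp_def]

lemma eastSums_length (l : List Bool) : (eastSums l).length = l.count true := by
  induction l with
  | nil => rfl
  | cons b l ih =>
      rw [eastSums_cons]
      cases b <;> simp [List.count_cons, ih]

lemma mem_eastSums {l : List Bool} {x : ℕ} :
    x ∈ eastSums l ↔ ∃ i, i < l.length ∧ l.getD i false = true ∧ x = i + 1 := by
  unfold eastSums
  simp only [List.mem_map, List.mem_filter, List.mem_range]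
  constructor
  · rintro ⟨i, ⟨h1, h2⟩, rfl⟩; exact ⟨i, h1, h2, rfl⟩
  · rintro ⟨i, h1, h2, rfl⟩; exact ⟨i, ⟨h1, h2⟩, rfl⟩

lemma eastSums_pos {l : List Bool} {x : ℕ} (h : x ∈ eastSums l) : 1 ≤ x := by
  rw [mem_eastSums] at h; omega

lemma eastSums_le {l : List Bool} {x : ℕ} (h : x ∈ eastSums l) : x ≤ l.length := by
  rw [mem_eastSums] at h; omega

lemma getElem_true_iff (l : List Bool) (i : ℕ) (h : i < l.length) :
    l[i] = true ↔ (i + 1) ∈ eastSums l := by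
  rw [mem_eastSums]
  constructor
  · intro hx; exact ⟨i, h, by rw [List.getD_eq_getElem _ _ h]; exact hx, rfl⟩
  · rintro ⟨j, hj, hget, hji⟩
    have : j = i := by omega
    subst this
    rw [List.getD_eq_getElem _ _ h] at hget
    exact hget

lemma eastSums_pairwise (l : List Bool) : (eastSums l).Pairwise (· < ·) := by
  unfold eastSums
  rw [List.pairwise_map]
  exact (List.pairwise_lt_range.filter _).imp (by omega)

lemma count_bool (l : List Bool) : l.count true + l.count false = l.length := by
  induction l with
  | nil => rfl
  | cons b l ih => cases b <;> simp [List.count_cons, ih] <;> omega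

lemma count_take (l : List Bool) : ∀ m : ℕ,
    (l.take m).count true = ((eastSums l).filter (· ≤ m)).length := by
  induction l with
  | nil => intro m; simp [eastSums]
  | cons b l ih =>
      intro m
      cases m with
      | zero =>
          simp only [List.take_zero, List.count_nil]
          rw [eq_comm, List.length_eq_zero_iff, List.filter_eq_nil_iff]
          intro x hx
          have := eastSums_pos (l := b :: l) (x := x) hx
          simp; omega
      | succ m =>
          rw [List.take_cons (Nat.succ_pos m), List.count_cons, eastSums_cons,
            List.filter_append, List.length_append, List.filter_map]
          have h2 : List.filter ((fun x => decide (x ≤ m + 1)) ∘ (· + 1)) (eastSums l)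
              = List.filter (· ≤ m) (eastSums l) := by
            apply List.filter_congr
            intro x _; simp [Function.comp]
          rw [h2, List.length_map]
          have := ih m
          cases b <;> simp [this] <;> omega

lemma get_le_iff {S : List ℕ} (hS : S.Pairwise (· < ·)) {i m : ℕ} (h : i < S.length) :
    S[i] ≤ m ↔ i < (S.filter (· ≤ m)).length := by
  rw [List.pairwise_iff_getElem] at hS
  constructor
  · intro hle
    have hdecomp : S.filter (· ≤ m)
        = (S.take (i+1)).filter (· ≤ m) ++ (S.drop (i+1)).filter (· ≤ m) := by
      rw [← List.filter_append, List.take_append_drop]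
    have htake : (S.take (i+1)).filter (· ≤ m) = S.take (i+1) := by
      rw [List.filter_eq_self]
      intro x hx
      obtain ⟨j, hj, rfl⟩ := List.mem_take_iff_getElem.1 hx
      have hj' : j < S.length := lt_of_lt_of_le hj (by simp)
      simp only [decide_eq_true_eq]
      rcases Nat.lt_or_ge j i with hji | hji
      · exact le_of_lt (lt_of_lt_of_le (hS j i hj' h hji) hle)
      · have : j = i := by omega
        subst this; exact hle
    have hlen : (S.take (i+1)).length = i + 1 := by
      rw [List.length_take]; omega
    rw [hdecomp, List.length_append, htake, hlen]; omega
  · intro hlt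
    by_contra hgt
    push_neg at hgt
    have hdecomp : S.filter (· ≤ m)
        = (S.take i).filter (· ≤ m) ++ (S.drop i).filter (· ≤ m) := by
      rw [← List.filter_append, List.take_append_drop]
    have hdrop : (S.drop i).filter (· ≤ m) = [] := by
      rw [List.filter_eq_nil_iff]
      intro x hx
      obtain ⟨j, hj, rfl⟩ := List.mem_drop_iff_getElem.1 hx
      simp only [decide_eq_true_eq, not_le]
      rcases Nat.eq_or_lt_of_le (Nat.zero_le j) with hj0 | hj0
      · simp [← hj0]; omega
      · exact lt_trans hgt (hS i (i+j) h (by omega) (by omega))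
    have : (S.filter (· ≤ m)).length ≤ i := by
      rw [hdecomp, List.length_append, hdrop]
      have := List.length_filter_le (fun x => decide (x ≤ m)) (S.take i)
      have := List.length_take (i := i) (l := S)
      simp only [List.length_nil]
      omega
    omega

lemma ivt (f : ℕ → ℤ) (h0 : f 0 < 0) (hstep : ∀ m, f (m+1) ≤ f m + 1) :
    ∀ M, 0 ≤ f M → ∃ m ≤ M, f m = 0 := by
  intro M
  induction M with
  | zero => intro h; omega
  | succ M ih =>
      intro h
      by_cases hM : 0 ≤ f M
      · obtain ⟨m, hm, hfm⟩ := ih hM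
        exact ⟨m, by omega, hfm⟩
      · exact ⟨M + 1, le_refl _, by have := hstep M; omega⟩

def fromTab (n : ℕ) (S : List ℕ) : List Bool :=
  (List.range n).map (fun i => decide ((i+1) ∈ S))

lemma fromTab_length (n : ℕ) (S : List ℕ) : (fromTab n S).length = n := by
  simp [fromTab]

lemma nodup_of_pairwise_lt {L : List ℕ} (h : L.Pairwise (· < ·)) : L.Nodup :=
  h.imp (fun hab => ne_of_lt hab)

lemma eastSums_fromTab (n : ℕ) (S : List ℕ) (hS : S.Pairwise (· < ·))
    (hmem : ∀ x ∈ S, 1 ≤ x ∧ x ≤ n) : eastSums (fromTab n S) = S := by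
  unfold eastSums
  rw [fromTab_length]
  have h1 : (List.range n).filter (fun i => (fromTab n S).getD i false)
      = (List.range n).filter (fun i => decide ((i+1) ∈ S)) := by
    apply List.filter_congr
    intro i hi
    rw [List.mem_range] at hi
    rw [List.getD_eq_getElem _ _ (by rw [fromTab_length]; exact hi)]
    simp [fromTab, hi]
  rw [h1]
  have h2 : ((List.range n).filter (fun i => decide ((i+1) ∈ S))).map (· + 1)
      = ((List.range n).map (· + 1)).filter (fun j => decide (j ∈ S)) := by
    rw [List.filter_map]; rfl
  rw [h2]
  have h3 : (List.range n).map (· + 1) = List.range' 1 n := by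
    rw [List.range'_eq_map_range]
    apply List.map_congr_left
    intro x _; omega
  rw [h3]
  haveI : IsAntisymm ℕ (· < ·) := ⟨fun a b h1 h2 => absurd h1 (lt_asymm h2)⟩
  refine (fun (hp : List.Perm _ _) (h1 : List.Pairwise (· < ·) _) (h2 : List.Pairwise (· < ·) _) =>
    hp.eq_of_pairwise (fun a b _ _ x y => absurd x (lt_asymm y)) h1 h2) ?_ ?_ ?_
  · rw [List.perm_ext_iff_of_nodup
      (nodup_of_pairwise_lt ((List.pairwise_lt_range' (s := 1) (n := n)).filter _))
      (nodup_of_pairwise_lt hS)]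
    intro a
    simp only [List.mem_filter, List.mem_range'_1, decide_eq_true_eq]
    constructor
    · rintro ⟨-, h⟩; exact h
    · intro h; exact ⟨by have := hmem a h; omega, h⟩
  · exact (List.pairwise_lt_range' (s := 1) (n := n)).filter _
  · exact hS

/-- The map sending an NE-path to the tuple `(x_1+y_1, …, x_k+y_k)` of coordinate
sums of the endpoints of its `k` east steps is a bijection from the t-admissible
NE-paths from (0,0) to (k,n-k) onto the t-admissible (n,k)-columnar tableaux. -/
theorem stmt6 (t n k : ℕ) (ht : 0 < t) (hk : k ≤ n) :
    Set.BijOn (fun (l : List Bool) (j : Fin k) => (eastSums l).getD (j : ℕ) 0)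
      (pathSet t n k)
      {T : Fin k → ℕ |
        StrictMono T ∧ (∀ i, 1 ≤ T i ∧ T i ≤ n) ∧
        (∀ j : ℕ, ∀ _ : 1 ≤ j, ∀ _ : j + t ≤ k + 1,
          t - 1 + 2 * j ≤ T ⟨t + j - 2, by omega⟩)} := by
  refine ⟨?_, ?_, ?_⟩
  · -- MapsTo
    rintro l ⟨hlen, hcnt, hadm⟩
    have hSlen : (eastSums l).length = k := by rw [eastSums_length, hcnt]
    have hSp := eastSums_pairwise l
    refine ⟨?_, ?_, ?_⟩
    · intro j1 j2 hlt
      show (eastSums l).getD j1 0 < (eastSums l).getD j2 0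
      rw [List.getD_eq_getElem _ _ (by omega : (j1:ℕ) < (eastSums l).length),
        List.getD_eq_getElem _ _ (by omega : (j2:ℕ) < (eastSums l).length)]
      exact List.pairwise_iff_getElem.1 hSp _ _ _ _ hlt
    · intro j
      have hj : (j:ℕ) < (eastSums l).length := by omega
      show 1 ≤ (eastSums l).getD j 0 ∧ (eastSums l).getD j 0 ≤ n
      rw [List.getD_eq_getElem _ _ hj]
      have hmem := List.getElem_mem hj
      exact ⟨eastSums_pos hmem, by rw [← hlen]; exact eastSums_le hmem⟩
    · intro j hj1 hj2
      have hik : t + j - 2 < k := by omega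
      have hiS : t + j - 2 < (eastSums l).length := by omega
      show t - 1 + 2 * j ≤ (eastSums l).getD (t + j - 2) 0
      rw [List.getD_eq_getElem _ _ hiS]
      by_contra hcon
      push_neg at hcon
      set M := (eastSums l)[t + j - 2] with hM
      have hstep : ∀ m, (l.take (m+1)).count true ≤ (l.take m).count true + 1 := by
        intro m
        rw [List.take_succ, List.count_append]
        have h1 : (l[m]?.toList).count true ≤ 1 := by
          rcases l[m]? with _ | b
          · simp
          · cases b <;> simp
        omega
      have hci : t + j - 1 ≤ (l.take M).count true := by
        have h1 := (get_le_iff hSp hiS).1 (le_refl M)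
        rw [count_take]
        omega
      set f : ℕ → ℤ := fun m => 2 * ((l.take m).count true : ℤ) - m - t with hf
      have hf0 : f 0 < 0 := by simp [hf]; omega
      have hfstep : ∀ m, f (m+1) ≤ f m + 1 := by
        intro m
        have := hstep m
        simp only [hf]
        push_cast
        omega
      have hfM : 0 ≤ f M := by
        simp only [hf]
        push_cast
        omega
      obtain ⟨m, hmM, hfm⟩ := ivt f hf0 hfstep M hfM
      have hmn : m ≤ n := by
        have := eastSums_le (List.getElem_mem hiS)
        omega
      have hp := hadm (l.take m) ((List.mem_inits _ _).2 (List.take_prefix m l))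
      have hlen' : (l.take m).length = m := by rw [List.length_take]; omega
      have hcb := count_bool (l.take m)
      apply hp
      simp only [hf] at hfm
      omega
  · -- InjOn
    rintro l1 ⟨h1len, h1cnt, -⟩ l2 ⟨h2len, h2cnt, -⟩ heq
    have hS1 : (eastSums l1).length = k := by rw [eastSums_length, h1cnt]
    have hS2 : (eastSums l2).length = k := by rw [eastSums_length, h2cnt]
    have hSeq : eastSums l1 = eastSums l2 := by
      apply List.ext_getElem (by omega)
      intro i hi1 hi2
      have h : (eastSums l1).getD i 0 = (eastSums l2).getD i 0 := congrFun heq ⟨i, by omega⟩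
      rwa [List.getD_eq_getElem _ _ hi1, List.getD_eq_getElem _ _ hi2] at h
    apply List.ext_getElem (by omega)
    intro i hi1 hi2
    rw [Bool.eq_iff_iff, getElem_true_iff _ _ hi1, getElem_true_iff _ _ hi2, hSeq]
  · -- SurjOn
    rintro T ⟨hmono, hbd, hcol⟩
    have hSp : (List.ofFn T).Pairwise (· < ·) := List.pairwise_ofFn.2 (fun i j h => hmono h)
    have hmemS : ∀ x ∈ List.ofFn T, 1 ≤ x ∧ x ≤ n := by
      intro x hx
      rw [List.mem_ofFn] at hx
      obtain ⟨i, rfl⟩ := hx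
      exact hbd i
    have hES : eastSums (fromTab n (List.ofFn T)) = List.ofFn T :=
      eastSums_fromTab n _ hSp hmemS
    have hllen : (fromTab n (List.ofFn T)).length = n := fromTab_length _ _
    have hcnt : (fromTab n (List.ofFn T)).count true = k := by
      rw [← eastSums_length, hES, List.length_ofFn]
    refine ⟨fromTab n (List.ofFn T), ⟨hllen, hcnt, ?_⟩, ?_⟩
    · intro p hp heqc
      have hpre := (List.mem_inits _ _).1 hp
      have hpt : p = (fromTab n (List.ofFn T)).take p.length := List.prefix_iff_eq_take.1 hpre
      have hmn : p.length ≤ n := by rw [← hllen]; exact hpre.length_le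
      have hcb := count_bool p
      set c := p.count true with hc
      set m := p.length with hm
      have hct : c = ((List.ofFn T).filter (· ≤ m)).length := by
        rw [hc, hpt, count_take, hES]
      have h2c : 2 * c = m + t := by omega
      have hck : c ≤ k := by
        have := List.length_filter_le (fun x => decide (x ≤ m)) (List.ofFn T)
        rw [List.length_ofFn] at this
        omega
      have htc : t ≤ c := by omega
      have hcS : c - 1 < (List.ofFn T).length := by rw [List.length_ofFn]; omega
      have hSle : (List.ofFn T)[c - 1]'hcS ≤ m := by
        rw [get_le_iff hSp hcS, ← hct]
        omega
      have hcol' := hcol (c - t + 1) (by omega) (by omega)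
      have hidx : (⟨t + (c - t + 1) - 2, by omega⟩ : Fin k) = ⟨c - 1, by omega⟩ :=
        Fin.mk_eq_mk.mpr (by omega)
      rw [hidx] at hcol'
      have hTeq : (List.ofFn T)[c - 1]'hcS = T ⟨c - 1, by omega⟩ :=
        List.getElem_ofFn hcS
      rw [hTeq] at hSle
      omega
    · funext j
      show (eastSums (fromTab n (List.ofFn T))).getD j 0 = T j
      have hjl : (j : ℕ) < (List.ofFn T).length := by rw [List.length_ofFn]; exact j.2
      rw [hES, List.getD_eq_getElem _ _ hjl]
      exact (List.getElem_ofFn hjl).trans (congrArg T (Fin.ext rfl))
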